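/- Let ω be a coherent state on a polarized C*-algebra (A, P̄) and ρ a nonzero positive linear functional on A with ρ ≤ ω. Then (1/ρ(1))ρ agrees with ω on P̄ and (1/ρ(1))ρ is itself a coherent state. -/
import Mathlib


set_option linter.unusedSectionVars false

open scoped ComplexOrder InnerProductSpace

variable {A : Type*} [NormedRing A] [StarRing A] [CStarRing A] [NormedAlgebra ℂ A]
  [StarModule ℂ A] [CompleteSpace A]

/-- A state on a unital C*-algebra: a positive linear functional of norm one
(equivalently, taking the value 1 at the unit). -/
def IsState (ω : A →ₗ[ℂ] ℂ) : Prop :=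
  ω 1 = 1 ∧ ∀ x : A, 0 ≤ ω (star x * x)

/-- A polarization of a unital C*-algebra `A`: a closed commutative unital Banach
subalgebra `P` generating `A` (as a C*-algebra) with `P ∩ P* = ℂ·1`. -/
def IsPolarization (P : Subalgebra ℂ A) : Prop :=
  IsClosed (P : Set A) ∧
  (∀ a ∈ P, ∀ b ∈ P, a * b = b * a) ∧
  (Algebra.adjoin ℂ ((P : Set A) ∪ star (P : Set A))).topologicalClosure = ⊤ ∧
  (∀ x ∈ P, star x ∈ P → ∃ c : ℂ, x = algebraMap ℂ A c)

/-- A coherent state on the polarized C*-algebra `(A, P)`. -/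
def IsCoherentState (P : Subalgebra ℂ A) (ω : A →ₗ[ℂ] ℂ) : Prop :=
  IsState ω ∧ ∀ x : A, ∀ a ∈ P, ω (x * a) = ω x * ω a

/-- The polarized C*-algebra `(A, P)` admits norm normal ordering: finite sums
`∑ bₖ* aₖ` with `aₖ, bₖ ∈ P` are norm-dense in `A`. -/
def AdmitsNormalOrdering (P : Subalgebra ℂ A) : Prop :=
  Dense {x : A | ∃ (n : ℕ) (a b : Fin n → A), (∀ i, a i ∈ P ∧ b i ∈ P) ∧
    x = ∑ i, star (b i) * a i}

/-- `(π, H, v)` is a GNS triple for the state `ω`. -/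
def IsGNS {H : Type*} [NormedAddCommGroup H] [InnerProductSpace ℂ H] [CompleteSpace H]
    (ω : A →ₗ[ℂ] ℂ) (π : A →⋆ₐ[ℂ] (H →L[ℂ] H)) (v : H) : Prop :=
  ‖v‖ = 1 ∧ (∀ x : A, ω x = ⟪v, π x v⟫_ℂ) ∧
    Dense (Set.range fun x : A => π x v)

lemma forall_real_nonneg_aux {K s : ℂ} (h : ∀ t : ℝ, 0 ≤ K + t * s) : s = 0 := by
  have him : ∀ t : ℝ, K.im + t * s.im = 0 := by
    intro t
    have := (Complex.nonneg_iff.mp (h t)).2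
    simpa using this.symm
  have hK : K.im = 0 := by simpa using him 0
  have hsim : s.im = 0 := by
    have := him 1; rw [hK] at this; simpa using this
  have hre : ∀ t : ℝ, 0 ≤ K.re + t * s.re := by
    intro t
    have := (Complex.nonneg_iff.mp (h t)).1
    simpa using this
  have hsre : s.re = 0 := by
    by_contra hne
    have := hre (-(K.re + 1) / s.re)
    rw [div_mul_cancel₀ _ hne] at this
    linarith
  exact Complex.ext (by simpa using hsre) (by simpa using hsim)

lemma cs_zero (φ : A →ₗ[ℂ] ℂ) (hφ : ∀ x : A, 0 ≤ φ (star x * x)) {y : A}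
    (hy : φ (star y * y) = 0) (x : A) : φ (star x * y) = 0 := by
  have expand : ∀ c : ℂ, φ (star (x + c • y) * (x + c • y)) =
      φ (star x * x) + c * φ (star x * y) + (starRingEnd ℂ c) * φ (star y * x) := by
    intro c
    have h1 : star (x + c • y) * (x + c • y) =
        star x * x + c • (star x * y) + (starRingEnd ℂ c) • (star y * x)
          + ((starRingEnd ℂ c) * c) • (star y * y) := by
      simp only [star_add, star_smul, add_mul, mul_add, smul_add, smul_mul_assoc,
        mul_smul_comm, smul_smul, starRingEnd_apply, mul_comm c (star c)]
      abel
    rw [h1]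
    simp only [map_add, map_smul, hy, smul_eq_mul, mul_zero, add_zero]
  set u := φ (star x * y) with hu
  set v := φ (star y * x) with hv
  have h1 : u + v = 0 := by
    apply forall_real_nonneg_aux (K := φ (star x * x))
    intro t
    have h := hφ (x + (t : ℂ) • y)
    rw [expand (t : ℂ)] at h
    have e : φ (star x * x) + (t : ℂ) * u + (starRingEnd ℂ (t : ℂ)) * v
        = φ (star x * x) + (t : ℂ) * (u + v) := by
      rw [Complex.conj_ofReal]; ring
    rw [e] at h
    exact h
  have h2 : Complex.I * (u - v) = 0 := by
    apply forall_real_nonneg_aux (K := φ (star x * x))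
    intro t
    have h := hφ (x + ((t : ℂ) * Complex.I) • y)
    rw [expand ((t : ℂ) * Complex.I)] at h
    have e : φ (star x * x) + ((t : ℂ) * Complex.I) * u
        + (starRingEnd ℂ ((t : ℂ) * Complex.I)) * v
        = φ (star x * x) + (t : ℂ) * (Complex.I * (u - v)) := by
      simp [map_mul, Complex.conj_ofReal, Complex.conj_I]; ring
    rw [e] at h
    exact h
  have huv : u = v := by
    have := mul_eq_zero.mp h2
    rcases this with h | h
    · exact absurd h Complex.I_ne_zero
    · exact sub_eq_zero.mp h
  have : 2 * u = 0 := by rw [two_mul]; nth_rewrite 2 [huv]; exact h1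
  simpa using this

lemma rho_one_pos (ρ : A →ₗ[ℂ] ℂ) (hρpos : ∀ x : A, 0 ≤ ρ (star x * x)) (hρne : ρ ≠ 0) :
    0 ≤ ρ 1 ∧ ρ 1 ≠ 0 := by
  have h1 : 0 ≤ ρ 1 := by simpa using hρpos 1
  refine ⟨h1, ?_⟩
  intro h0
  apply hρne
  ext x
  have hy : ρ (star (1 : A) * 1) = 0 := by simpa using h0
  have := cs_zero ρ hρpos hy (star x)
  simpa using this

lemma rho_mul_mem (P : Subalgebra ℂ A)
    (ω : A →ₗ[ℂ] ℂ) (hω : IsCoherentState P ω)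
    (ρ : A →ₗ[ℂ] ℂ) (hρpos : ∀ x : A, 0 ≤ ρ (star x * x))
    (hle : ∀ x : A, ρ (star x * x) ≤ ω (star x * x))
    (x : A) {a : A} (ha : a ∈ P) : ρ (x * a) = ω a * ρ x := by
  set a' : A := a - ω a • 1 with ha'
  have ha'P : a' ∈ P := sub_mem ha (Subalgebra.smul_mem P (one_mem P) _)
  have hωa' : ω a' = 0 := by
    simp [ha', map_sub, map_smul, hω.1.1]
  have hωq : ω (star a' * a') = 0 := by
    rw [hω.2 (star a') a' ha'P, hωa', mul_zero]
  have hρq : ρ (star a' * a') = 0 := by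
    refine le_antisymm ?_ (hρpos a')
    rw [← hωq]; exact hle a'
  have key : ρ (x * a') = 0 := by
    have := cs_zero ρ hρpos hρq (star x)
    simpa using this
  have hx : x * a' = x * a - ω a • x := by
    rw [ha', mul_sub, mul_smul_comm, mul_one]
  rw [hx, map_sub, map_smul, sub_eq_zero] at key
  rw [key]; simp [mul_comm]

/-- If `ρ` is a nonzero positive functional dominated by a coherent state
`ω` on the polarized C*-algebra `(A, P̄)`, then `ρ/ρ(1)` agrees with `ω` on `P̄` and is
itself a coherent state. -/
theorem stmt_5 (P : Subalgebra ℂ A) (hP : IsPolarization P)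
    (ω : A →ₗ[ℂ] ℂ) (hω : IsCoherentState P ω)
    (ρ : A →ₗ[ℂ] ℂ) (hρpos : ∀ x : A, 0 ≤ ρ (star x * x)) (hρne : ρ ≠ 0)
    (hle : ∀ x : A, ρ (star x * x) ≤ ω (star x * x)) :
    (∀ a ∈ P, (ρ 1)⁻¹ * ρ a = ω a) ∧ IsCoherentState P ((ρ 1)⁻¹ • ρ) := by
  obtain ⟨hρ1nonneg, hρ1ne⟩ := rho_one_pos ρ hρpos hρne
  have hmul : ∀ x : A, ∀ a ∈ P, ρ (x * a) = ω a * ρ x := fun x a ha =>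
    rho_mul_mem P ω hω ρ hρpos hle x ha
  have hagree : ∀ a ∈ P, (ρ 1)⁻¹ * ρ a = ω a := by
    intro a ha
    have := hmul 1 a ha
    rw [one_mul] at this
    rw [this, mul_comm (ω a) (ρ 1), ← mul_assoc, inv_mul_cancel₀ hρ1ne, one_mul]
  refine ⟨hagree, ⟨⟨?_, ?_⟩, ?_⟩⟩
  · simp [inv_mul_cancel₀ hρ1ne]
  · intro x
    have hinv : 0 ≤ (ρ 1)⁻¹ := by
      obtain ⟨hre, him⟩ := Complex.nonneg_iff.mp hρ1nonneg
      have : ρ 1 = ((ρ 1).re : ℂ) := Complex.ext rfl (by simpa using him.symm)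
      rw [this, ← Complex.ofReal_inv]
      exact Complex.zero_le_real.mpr (by positivity)
    simpa using mul_nonneg hinv (hρpos x)
  · intro x a ha
    have h1 := hmul x a ha
    have h2 := hagree a ha
    simp only [LinearMap.smul_apply, smul_eq_mul, h1, ← h2]
    ring
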